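/- arXiv:2104.07710 — 2 statements merged into one kernel-verified Lean document; each statement's English description precedes it below -/
import Mathlib

section
/- Let P and Q be finite multisets of points in ℝ² (persistence diagrams above the diagonal). Let P̂ = P ∪ π(Q) and Q̂ = Q ∪ π(P), where π projects to the diagonal. Then the optimal transport (1-Wasserstein) distance between the uniform discrete measures induced by P̂ and Q̂ (under the Euclidean metric) is at most 2 times the 1-Wasserstein distance between the persistence diagrams P and Q, where the latter allows points to be matched to their diagonal projections. -/
noncomputable section

/-- Points in the plane with the Euclidean norm. -/
abbrev Pt := EuclideanSpace ℝ (Fin 2)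

/-- Orthogonal projection onto the diagonal line `y = x`. -/
def proj (p : Pt) : Pt := WithLp.toLp 2 (fun _ => (p 0 + p 1) / 2)

/-- An augmented matching between two indexed multisets of points (of sizes `m`, `n`):
each left point is either matched to a right point (injectively) or left unmatched, in
which case it is matched to its diagonal projection; right points not in the image are
likewise matched to their diagonal projections. -/
structure AugMatching (m n : ℕ) where
  σ : Fin m → Option (Fin n)
  inj : ∀ i i' j, σ i = some j → σ i' = some j → i = i'

open Classical in
/-- The total Euclidean cost of an augmented matching. -/
def matchCost {m n : ℕ} (P : Fin m → Pt) (Q : Fin n → Pt) (M : AugMatching m n) : ℝ :=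
  (∑ i, (M.σ i).elim (dist (P i) (proj (P i))) (fun j => dist (P i) (Q j))) +
    ∑ j, if ∃ i, M.σ i = some j then 0 else dist (Q j) (proj (Q j))

/-- The 1-Wasserstein distance between two persistence diagrams: the infimum of the
cost over all augmented matchings. -/
def dW {m n : ℕ} (P : Fin m → Pt) (Q : Fin n → Pt) : ℝ :=
  sInf {c | ∃ M : AugMatching m n, matchCost P Q M = c}

/-- A coupling between two uniform unit-mass discrete measures indexed by `ι`. -/
def IsCoupling {ι : Type} [Fintype ι] (τ : ι → ι → ℝ) : Prop :=
  (∀ i j, 0 ≤ τ i j) ∧ (∀ i, ∑ j, τ i j = 1) ∧ (∀ j, ∑ i, τ i j = 1)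

/-- The optimal transport (1-Wasserstein) distance between the uniform unit-mass
discrete measures induced by two indexed families of points, under the Euclidean metric. -/
def dOT {ι : Type} [Fintype ι] (A B : ι → Pt) : ℝ :=
  sInf {c | ∃ τ : ι → ι → ℝ, IsCoupling τ ∧ (∑ i, ∑ j, τ i j * dist (A i) (B j)) = c}


section Aux

open Classical in
def tau {m n : ℕ} (M : AugMatching m n) : (Fin m ⊕ Fin n) → (Fin m ⊕ Fin n) → ℝ
  | .inl i, .inl i' => if i' = i ∧ M.σ i = none then 1 else 0
  | .inl i, .inr j  => if M.σ i = some j then 1 else 0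
  | .inr j, .inl i  => if M.σ i = some j then 1 else 0
  | .inr j, .inr j' => if j' = j ∧ (∀ i, M.σ i ≠ some j) then 1 else 0
open Classical

lemma tau_marg_placeholder : True := trivial

lemma proj_lip (a b : Pt) : dist (proj a) (proj b) ≤ dist a b := by
  rw [EuclideanSpace.dist_eq, EuclideanSpace.dist_eq]
  apply Real.sqrt_le_sqrt
  simp only [proj, Fin.sum_univ_two, Real.dist_eq, sq_abs, WithLp.ofLp_toLp]
  nlinarith [sq_nonneg ((a 0 - b 0) - (a 1 - b 1))]

lemma cost_le {m n : ℕ} (P : Fin m → Pt) (Q : Fin n → Pt) (M : AugMatching m n) :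
    (∑ k, ∑ l, tau M k l * dist (Sum.elim P (proj ∘ Q) k) (Sum.elim (proj ∘ P) Q l))
      ≤ 2 * matchCost P Q M := by
  rw [Fintype.sum_sum_type]
  simp only [Sum.elim_inl, Sum.elim_inr, Function.comp_apply]
  have claim1 : ∀ i, (∑ l, tau M (.inl i) l * dist (P i) (Sum.elim (proj ∘ P) Q l)) =
      (M.σ i).elim (dist (P i) (proj (P i))) (fun j => dist (P i) (Q j)) := by
    intro i
    rw [Fintype.sum_sum_type]
    rcases h : M.σ i with _ | j0
    · simp [tau, h]
    · simp [tau, h, eq_comm]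
  have claim2 : ∀ j, (∑ l, tau M (.inr j) l * dist (proj (Q j)) (Sum.elim (proj ∘ P) Q l)) ≤
      (if ∃ i, M.σ i = some j then 0 else dist (Q j) (proj (Q j))) +
        ∑ i, (if M.σ i = some j then dist (P i) (Q j) else 0) := by
    intro j
    rw [Fintype.sum_sum_type]
    by_cases h : ∃ i, M.σ i = some j
    · obtain ⟨i0, hi0⟩ := h
      have h1 : ∀ i, tau M (.inr j) (.inl i) * dist (proj (Q j)) (proj (P i)) =
          if i = i0 then dist (proj (Q j)) (proj (P i0)) else 0 := by
        intro i
        show (if M.σ i = some j then (1:ℝ) else 0) * _ = _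
        by_cases hi : M.σ i = some j
        · have := M.inj i i0 j hi hi0
          subst this; rw [if_pos hi, if_pos rfl, one_mul]
        · rw [if_neg hi, if_neg, zero_mul]; rintro rfl; exact hi hi0
      have h2 : ∀ j', tau M (.inr j) (.inr j') * dist (proj (Q j)) (Q j') = 0 := by
        intro j'
        show (if j' = j ∧ (∀ i, M.σ i ≠ some j) then (1:ℝ) else 0) * _ = 0
        rw [if_neg, zero_mul]; rintro ⟨-, hno⟩; exact hno i0 hi0
      simp only [Sum.elim_inl, Sum.elim_inr, Function.comp_apply, h1, h2,
        Finset.sum_ite_eq', Finset.mem_univ, if_true, Finset.sum_const_zero, add_zero]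
      rw [if_pos ⟨i0, hi0⟩, zero_add]
      calc dist (proj (Q j)) (proj (P i0)) ≤ dist (Q j) (P i0) := proj_lip _ _
        _ = (if M.σ i0 = some j then dist (P i0) (Q j) else 0) := by
              rw [if_pos hi0, dist_comm]
        _ ≤ _ := Finset.single_le_sum (f := fun i => if M.σ i = some j then dist (P i) (Q j) else 0)
              (fun i _ => by split <;> positivity) (Finset.mem_univ i0)
    · push_neg at h
      have h1 : ∀ i, tau M (.inr j) (.inl i) * dist (proj (Q j)) (proj (P i)) = 0 := by
        intro i
        show (if M.σ i = some j then (1:ℝ) else 0) * _ = 0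
        rw [if_neg (h i), zero_mul]
      have h2 : ∀ j', tau M (.inr j) (.inr j') * dist (proj (Q j)) (Q j') =
          if j' = j then dist (proj (Q j)) (Q j) else 0 := by
        intro j'
        show (if j' = j ∧ (∀ i, M.σ i ≠ some j) then (1:ℝ) else 0) * _ = _
        by_cases hj : j' = j
        · subst hj; rw [if_pos ⟨rfl, h⟩, if_pos rfl, one_mul]
        · rw [if_neg (fun c => hj c.1), if_neg hj, zero_mul]
      simp only [Sum.elim_inl, Sum.elim_inr, Function.comp_apply, h1, h2,
        Finset.sum_ite_eq', Finset.mem_univ, if_true, Finset.sum_const_zero, zero_add]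
      rw [if_neg (by rintro ⟨i, hi⟩; exact h i hi)]
      have : ∀ i, (if M.σ i = some j then dist (P i) (Q j) else 0) = 0 := fun i => by
        rw [if_neg (h i)]
      rw [Finset.sum_congr rfl (fun i _ => this i), Finset.sum_const_zero, add_zero, dist_comm]
  have swap : (∑ j, ∑ i, (if M.σ i = some j then dist (P i) (Q j) else 0)) ≤
      ∑ i, (M.σ i).elim (dist (P i) (proj (P i))) (fun j => dist (P i) (Q j)) := by
    rw [Finset.sum_comm]
    apply Finset.sum_le_sum
    intro i _
    rcases h : M.σ i with _ | j0
    · simp only [h, Option.elim]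
      rw [Finset.sum_congr rfl (fun j _ => by
        show (if (none : Option (Fin n)) = some j then dist (P i) (Q j) else 0) = 0
        simp)]
      simp [dist_nonneg]
    · simp only [h, Option.elim]
      rw [Finset.sum_congr rfl (fun j _ => by
        show (if some j0 = some j then dist (P i) (Q j) else 0) = if j = j0 then dist (P i) (Q j) else 0
        simp [eq_comm])]
      simp
  have hsec : (0:ℝ) ≤ ∑ j, if ∃ i, M.σ i = some j then 0 else dist (Q j) (proj (Q j)) := by
    apply Finset.sum_nonneg; intro j _; split <;> positivity
  calc (∑ i, ∑ l, tau M (.inl i) l * dist (P i) (Sum.elim (proj ∘ P) Q l))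
        + ∑ j, ∑ l, tau M (.inr j) l * dist (proj (Q j)) (Sum.elim (proj ∘ P) Q l)
      = (∑ i, (M.σ i).elim (dist (P i) (proj (P i))) (fun j => dist (P i) (Q j)))
        + ∑ j, ∑ l, tau M (.inr j) l * dist (proj (Q j)) (Sum.elim (proj ∘ P) Q l) := by
        rw [Finset.sum_congr rfl (fun i _ => claim1 i)]
    _ ≤ (∑ i, (M.σ i).elim (dist (P i) (proj (P i))) (fun j => dist (P i) (Q j)))
        + ∑ j, ((if ∃ i, M.σ i = some j then 0 else dist (Q j) (proj (Q j))) +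
          ∑ i, (if M.σ i = some j then dist (P i) (Q j) else 0)) := by
        gcongr; exact claim2 _
    _ ≤ 2 * matchCost P Q M := by
        rw [Finset.sum_add_distrib, matchCost]
        have := swap
        linarith

lemma tau_nonneg {m n : ℕ} (M : AugMatching m n) (k l : Fin m ⊕ Fin n) : 0 ≤ tau M k l := by
  cases k <;> cases l <;> simp only [tau] <;> split <;> norm_num

lemma tau_row {m n : ℕ} (M : AugMatching m n) (k : Fin m ⊕ Fin n) :
    ∑ l, tau M k l = 1 := by
  rw [Fintype.sum_sum_type]
  cases k with
  | inl i =>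
    rcases h : M.σ i with _ | j0
    · simp [tau, h]
    · simp [tau, h, eq_comm]
  | inr j =>
    by_cases h : ∃ i, M.σ i = some j
    · obtain ⟨i0, hi0⟩ := h
      have h1 : ∀ i, tau M (.inr j) (.inl i) = if i = i0 then 1 else 0 := by
        intro i
        show (if M.σ i = some j then (1:ℝ) else 0) = _
        by_cases hi : M.σ i = some j
        · rw [if_pos hi, if_pos (M.inj i i0 j hi hi0)]
        · rw [if_neg hi, if_neg]; rintro rfl; exact hi hi0
      have h2 : ∀ j', tau M (.inr j) (.inr j') = 0 := by
        intro j'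
        show (if j' = j ∧ (∀ i, M.σ i ≠ some j) then (1:ℝ) else 0) = 0
        rw [if_neg]; rintro ⟨-, hno⟩; exact hno i0 hi0
      simp [h1, h2]
    · push_neg at h
      have h1 : ∀ i, tau M (.inr j) (.inl i) = 0 := by
        intro i; show (if M.σ i = some j then (1:ℝ) else 0) = 0; simp [h i]
      have h2 : ∀ j', tau M (.inr j) (.inr j') = if j' = j then 1 else 0 := by
        intro j'
        show (if j' = j ∧ (∀ i, M.σ i ≠ some j) then (1:ℝ) else 0) = _
        by_cases hj : j' = j
        · rw [if_pos ⟨hj, h⟩, if_pos hj]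
        · rw [if_neg (fun c => hj c.1), if_neg hj]
      simp [h1, h2]

lemma tau_col {m n : ℕ} (M : AugMatching m n) (l : Fin m ⊕ Fin n) :
    ∑ k, tau M k l = 1 := by
  rw [Fintype.sum_sum_type]
  cases l with
  | inl i =>
    rcases h : M.σ i with _ | j0
    · have h1 : ∀ i', tau M (.inl i') (.inl i) = if i' = i then 1 else 0 := by
        intro i'
        show (if i = i' ∧ M.σ i' = none then (1:ℝ) else 0) = _
        by_cases hi : i' = i
        · subst hi; rw [if_pos ⟨rfl, h⟩, if_pos rfl]
        · rw [if_neg, if_neg hi]; rintro ⟨rfl, -⟩; exact hi rfl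
      have h2 : ∀ j, tau M (.inr j) (.inl i) = 0 := by
        intro j; show (if M.σ i = some j then (1:ℝ) else 0) = 0; simp [h]
      simp [h1, h2]
    · have h1 : ∀ i', tau M (.inl i') (.inl i) = 0 := by
        intro i'
        show (if i = i' ∧ M.σ i' = none then (1:ℝ) else 0) = 0
        rw [if_neg]; rintro ⟨rfl, hn⟩; rw [h] at hn; cases hn
      have h2 : ∀ j, tau M (.inr j) (.inl i) = if j = j0 then 1 else 0 := by
        intro j; show (if M.σ i = some j then (1:ℝ) else 0) = _; simp [h, eq_comm]
      simp [h1, h2]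
  | inr j =>
    by_cases h : ∃ i, M.σ i = some j
    · obtain ⟨i0, hi0⟩ := h
      have h1 : ∀ i, tau M (.inl i) (.inr j) = if i = i0 then 1 else 0 := by
        intro i
        show (if M.σ i = some j then (1:ℝ) else 0) = _
        by_cases hi : M.σ i = some j
        · rw [if_pos hi, if_pos (M.inj i i0 j hi hi0)]
        · rw [if_neg hi, if_neg]; rintro rfl; exact hi hi0
      have h2 : ∀ j', tau M (.inr j') (.inr j) = 0 := by
        intro j'
        show (if j = j' ∧ (∀ i, M.σ i ≠ some j') then (1:ℝ) else 0) = 0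
        rw [if_neg]; rintro ⟨rfl, hno⟩; exact hno i0 hi0
      simp [h1, h2]
    · push_neg at h
      have h1 : ∀ i, tau M (.inl i) (.inr j) = 0 := by
        intro i; show (if M.σ i = some j then (1:ℝ) else 0) = 0; simp [h i]
      have h2 : ∀ j', tau M (.inr j') (.inr j) = if j' = j then 1 else 0 := by
        intro j'
        show (if j = j' ∧ (∀ i, M.σ i ≠ some j') then (1:ℝ) else 0) = _
        by_cases hj : j' = j
        · subst hj; rw [if_pos ⟨rfl, h⟩, if_pos rfl]
        · rw [if_neg, if_neg hj]; rintro ⟨rfl, -⟩; exact hj rfl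
      simp [h1, h2]

end Aux

/-- Observation 1: for persistence diagrams `P`, `Q` (finite multisets of points above the
diagonal), with `P̂ = P ∪ π(Q)` and `Q̂ = Q ∪ π(P)`, the optimal transport distance between
the uniform discrete measures induced by `P̂` and `Q̂` is at most `2 · d_W(P, Q)`. -/
theorem dOT_augmented_le_two_dW {m n : ℕ} (P : Fin m → Pt) (Q : Fin n → Pt)
    (hP : ∀ i, (P i) 0 < (P i) 1) (hQ : ∀ j, (Q j) 0 < (Q j) 1) :
    dOT (Sum.elim P (proj ∘ Q)) (Sum.elim (proj ∘ P) Q) ≤ 2 * dW P Q := by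
  set S := {c | ∃ M : AugMatching m n, matchCost P Q M = c} with hS
  have hset : S.Nonempty := by
    refine ⟨matchCost P Q ⟨fun _ => none, ?_⟩, ⟨_, rfl⟩⟩
    intro i i' j h; cases h
  have key : ∀ c ∈ S, dOT (Sum.elim P (proj ∘ Q)) (Sum.elim (proj ∘ P) Q) / 2 ≤ c := by
    rintro c ⟨M, rfl⟩
    have hmem : (∑ k, ∑ l, tau M k l * dist (Sum.elim P (proj ∘ Q) k) (Sum.elim (proj ∘ P) Q l))
        ∈ {c | ∃ τ : (Fin m ⊕ Fin n) → (Fin m ⊕ Fin n) → ℝ, IsCoupling τ ∧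
            (∑ k, ∑ l, τ k l * dist (Sum.elim P (proj ∘ Q) k) (Sum.elim (proj ∘ P) Q l)) = c} :=
      ⟨tau M, ⟨tau_nonneg M, tau_row M, tau_col M⟩, rfl⟩
    have hbdd : BddBelow {c | ∃ τ : (Fin m ⊕ Fin n) → (Fin m ⊕ Fin n) → ℝ, IsCoupling τ ∧
        (∑ k, ∑ l, τ k l * dist (Sum.elim P (proj ∘ Q) k) (Sum.elim (proj ∘ P) Q l)) = c} := by
      refine ⟨0, ?_⟩
      rintro c ⟨τ, hτ, rfl⟩
      apply Finset.sum_nonneg; intro k _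
      apply Finset.sum_nonneg; intro l _
      exact mul_nonneg (hτ.1 k l) dist_nonneg
    have h1 : dOT (Sum.elim P (proj ∘ Q)) (Sum.elim (proj ∘ P) Q)
        ≤ ∑ k, ∑ l, tau M k l * dist (Sum.elim P (proj ∘ Q) k) (Sum.elim (proj ∘ P) Q l) :=
      csInf_le hbdd hmem
    have h2 := cost_le P Q M
    linarith
  have hfin : dOT (Sum.elim P (proj ∘ Q)) (Sum.elim (proj ∘ P) Q) / 2 ≤ sInf S :=
    le_csInf hset key
  have hdw : dW P Q = sInf S := rfl
  rw [hdw]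
  linarith
end
end

section
/- Let T be a rooted tree with nonnegative edge weights, inducing the path metric d_T on its leaves. Let μ and ν be two discrete measures of equal total mass supported on the leaves. The greedy flow — which at each node matches as much of the remaining μ-demand to the remaining ν-demand of that node's subtree as possible, passing the excess |μ̂(v) − ν̂(v)| to the parent — achieves cost equal to Σ_{v} w(e_v)·|μ(subtree(v)) − ν(subtree(v))|, where w(e_v) is the weight of the edge from v to its parent, and this equals the optimal transport cost between μ and ν under the tree metric d_T. -/
noncomputable section
open Finset Classical

variable {V : Type*} [Fintype V] [DecidableEq V]

/-- Total mass of a discrete measure `μ` in the subtree rooted at `v` (the set of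
vertices having `v` as an iterated-parent ancestor, including `v` itself). -/

def subMass (parent : V → V) (μ : V → ℝ) (v : V) : ℝ :=
  ∑ x, if ∃ k, parent^[k] x = v then μ x else 0

/-- The weighted path metric of a rooted tree, where `w v` is the weight of the edge
from `v` to its parent: the edge above `v` lies on the path from `x` to `y` iff exactly
one of `x, y` belongs to the subtree of `v`. -/

def treeDist (root : V) (parent : V → V) (w : V → ℝ) (x y : V) : ℝ :=
  ∑ v ∈ Finset.univ.erase root,
    w v * |(if ∃ k, parent^[k] x = v then (1 : ℝ) else 0) -
            (if ∃ k, parent^[k] y = v then (1 : ℝ) else 0)|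

/-- A transport plan (coupling) between two discrete measures on `V`. -/
def IsPlan (μ ν : V → ℝ) (τ : V → V → ℝ) : Prop :=
  (∀ x y, 0 ≤ τ x y) ∧ (∀ x, ∑ y, τ x y = μ x) ∧ (∀ y, ∑ x, τ x y = ν y)

/-- The optimal transport cost between discrete measures `μ`, `ν` on the leaves of the
tree, under the tree path metric. -/
def treeOT (root : V) (parent : V → V) (w : V → ℝ) (μ ν : V → ℝ) : ℝ :=
  sInf {c | ∃ τ : V → V → ℝ, IsPlan μ ν τ ∧
    (∑ x, ∑ y, τ x y * treeDist root parent w x y) = c}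

/-- `v` is a leaf: it has no children other than (possibly) itself. -/
def IsLeaf (parent : V → V) (v : V) : Prop := ∀ u, parent u = v → u = v

set_option linter.unusedSectionVars false
set_option linter.unusedVariables false
set_option maxHeartbeats 1000000


def cross (parent : V → V) (τ : V → V → ℝ) (v : V) : ℝ :=
  ∑ x, ∑ y, τ x y * |(if ∃ k, parent^[k] x = v then (1:ℝ) else 0) -
            (if ∃ k, parent^[k] y = v then (1:ℝ) else 0)|


lemma nested (parent : V → V) {u v x : V}
    (hu : ∃ k, parent^[k] x = u) (hv : ∃ k, parent^[k] x = v) :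
    (∀ y, (∃ k, parent^[k] y = u) → (∃ k, parent^[k] y = v)) ∨
    (∀ y, (∃ k, parent^[k] y = v) → (∃ k, parent^[k] y = u)) := by
  obtain ⟨j, hj⟩ := hu; obtain ⟨k, hk⟩ := hv
  rcases le_total j k with h | h
  · left
    rintro y ⟨m, hm⟩
    exact ⟨(k - j) + m, by
      rw [Function.iterate_add_apply, hm, ← hj, ← Function.iterate_add_apply,
        Nat.sub_add_cancel h, hk]⟩
  · right
    rintro y ⟨m, hm⟩
    exact ⟨(j - k) + m, by
      rw [Function.iterate_add_apply, hm, ← hk, ← Function.iterate_add_apply,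
        Nat.sub_add_cancel h, hj]⟩

lemma bad1 (parent : V → V) {u v x y y' : V}
    (hx : ∃ k, parent^[k] x = v) (hy' : ∃ k, parent^[k] y' = v)
    (hy : ¬∃ k, parent^[k] y = v)
    (h1 : ∃ k, parent^[k] x = u) (h2 : ∃ k, parent^[k] y = u)
    (h4 : ¬∃ k, parent^[k] y' = u) : False := by
  rcases nested parent h1 hx with hsub | hsub
  exacts [hy (hsub y h2), h4 (hsub y' hy')]

lemma bad2 (parent : V → V) {u v x x' y' : V}
    (hx : ∃ k, parent^[k] x = v) (hy' : ∃ k, parent^[k] y' = v)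
    (hx' : ¬∃ k, parent^[k] x' = v)
    (h1 : ¬∃ k, parent^[k] x = u) (h3 : ∃ k, parent^[k] x' = u)
    (h4 : ∃ k, parent^[k] y' = u) : False := by
  rcases nested parent h4 hy' with hsub | hsub
  exacts [hx' (hsub x' h3), h1 (hsub x hx)]

lemma dist_quad (root : V) (parent : V → V) (w : V → ℝ) (hw : ∀ v, 0 ≤ w v)
    {v x y x' y' : V} (hv : v ∈ Finset.univ.erase root)
    (hx : ∃ k, parent^[k] x = v) (hy' : ∃ k, parent^[k] y' = v)
    (hx' : ¬ ∃ k, parent^[k] x' = v) (hy : ¬ ∃ k, parent^[k] y = v) :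
    treeDist root parent w x y' + treeDist root parent w x' y + 2 * w v ≤
    treeDist root parent w x y + treeDist root parent w x' y' := by
  unfold treeDist
  have hv2 : 2 * w v = ∑ u ∈ Finset.univ.erase root, if u = v then 2 * w v else 0 := by
    rw [Finset.sum_ite_eq' _ v (fun _ => 2 * w v), if_pos hv]
  rw [hv2, ← Finset.sum_add_distrib, ← Finset.sum_add_distrib, ← Finset.sum_add_distrib]
  apply Finset.sum_le_sum
  intro u _
  by_cases huv : u = v
  · subst huv
    rw [if_pos rfl, if_pos hx, if_pos hy', if_neg hx', if_neg hy]
    simp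
    nlinarith [hw u]
  · rw [if_neg huv, add_zero]
    have key : |(if ∃ k, parent^[k] x = u then (1:ℝ) else 0) -
            (if ∃ k, parent^[k] y' = u then (1:ℝ) else 0)| +
        |(if ∃ k, parent^[k] x' = u then (1:ℝ) else 0) -
            (if ∃ k, parent^[k] y = u then (1:ℝ) else 0)| ≤
        |(if ∃ k, parent^[k] x = u then (1:ℝ) else 0) -
            (if ∃ k, parent^[k] y = u then (1:ℝ) else 0)| +
        |(if ∃ k, parent^[k] x' = u then (1:ℝ) else 0) -
            (if ∃ k, parent^[k] y' = u then (1:ℝ) else 0)| := by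
      by_cases h1 : ∃ k, parent^[k] x = u <;>
      by_cases h2 : ∃ k, parent^[k] y = u <;>
      by_cases h3 : ∃ k, parent^[k] x' = u <;>
      by_cases h4 : ∃ k, parent^[k] y' = u <;>
      simp [h1, h2, h3, h4] <;>
      first
        | exact (bad1 parent hx hy' hy h1 h2 h4).elim
        | exact (bad2 parent hx hy' hx' h1 h3 h4).elim
        | norm_num
    nlinarith [hw u, key]

lemma cost_eq (root : V) (parent : V → V) (w : V → ℝ) (τ : V → V → ℝ) :
    ∑ x, ∑ y, τ x y * treeDist root parent w x y =
    ∑ v ∈ Finset.univ.erase root, w v * cross parent τ v := by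
  unfold treeDist cross
  simp_rw [Finset.mul_sum]
  trans ∑ x, ∑ v ∈ Finset.univ.erase root, ∑ y,
      τ x y * (w v * |(if ∃ k, parent^[k] x = v then (1:ℝ) else 0) -
            (if ∃ k, parent^[k] y = v then (1:ℝ) else 0)|)
  · exact Finset.sum_congr rfl fun x _ => Finset.sum_comm
  trans ∑ v ∈ Finset.univ.erase root, ∑ x, ∑ y,
      τ x y * (w v * |(if ∃ k, parent^[k] x = v then (1:ℝ) else 0) -
            (if ∃ k, parent^[k] y = v then (1:ℝ) else 0)|)
  · exact Finset.sum_comm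
  apply Finset.sum_congr rfl
  intro v _
  apply Finset.sum_congr rfl
  intro x _
  apply Finset.sum_congr rfl
  intro y _
  ring

lemma subMass_eq (parent : V → V) (μ : V → ℝ) (v : V) :
    subMass parent μ v = ∑ x, (if ∃ k, parent^[k] x = v then (1:ℝ) else 0) * μ x := by
  unfold subMass
  apply Finset.sum_congr rfl
  intro x _
  by_cases h : ∃ k, parent^[k] x = v <;> simp [h]

lemma plan_diff (parent : V → V) {μ ν : V → ℝ} {τ : V → V → ℝ} (hτ : IsPlan μ ν τ)
    (v : V) :
    subMass parent μ v - subMass parent ν v =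
    ∑ x, ∑ y, τ x y * ((if ∃ k, parent^[k] x = v then (1:ℝ) else 0) -
            (if ∃ k, parent^[k] y = v then (1:ℝ) else 0)) := by
  have e1 : ∑ x, ∑ y, τ x y * (if ∃ k, parent^[k] x = v then (1:ℝ) else 0)
      = subMass parent μ v := by
    rw [subMass_eq]
    apply Finset.sum_congr rfl
    intro x _
    rw [← Finset.sum_mul, hτ.2.1 x, mul_comm]
  have e2 : ∑ x, ∑ y, τ x y * (if ∃ k, parent^[k] y = v then (1:ℝ) else 0)
      = subMass parent ν v := by
    rw [Finset.sum_comm, subMass_eq]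
    apply Finset.sum_congr rfl
    intro y _
    rw [← Finset.sum_mul, hτ.2.2 y, mul_comm]
  simp_rw [mul_sub, Finset.sum_sub_distrib]
  rw [e1, e2]

lemma lower_bound (root : V) (parent : V → V) (w : V → ℝ) (hw : ∀ v, 0 ≤ w v)
    {μ ν : V → ℝ} {τ : V → V → ℝ} (hτ : IsPlan μ ν τ) :
    ∑ v ∈ Finset.univ.erase root, w v * |subMass parent μ v - subMass parent ν v| ≤
    ∑ x, ∑ y, τ x y * treeDist root parent w x y := by
  rw [cost_eq]
  apply Finset.sum_le_sum
  intro v _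
  apply mul_le_mul_of_nonneg_left _ (hw v)
  rw [plan_diff parent hτ v]
  calc |∑ x, ∑ y, τ x y * ((if ∃ k, parent^[k] x = v then (1:ℝ) else 0) -
            (if ∃ k, parent^[k] y = v then (1:ℝ) else 0))|
      ≤ ∑ x, |∑ y, τ x y * ((if ∃ k, parent^[k] x = v then (1:ℝ) else 0) -
            (if ∃ k, parent^[k] y = v then (1:ℝ) else 0))| := Finset.abs_sum_le_sum_abs _ _
    _ ≤ ∑ x, ∑ y, |τ x y * ((if ∃ k, parent^[k] x = v then (1:ℝ) else 0) -
            (if ∃ k, parent^[k] y = v then (1:ℝ) else 0))| :=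
        Finset.sum_le_sum fun x _ => Finset.abs_sum_le_sum_abs _ _
    _ = cross parent τ v := by
        unfold cross
        apply Finset.sum_congr rfl; intro x _
        apply Finset.sum_congr rfl; intro y _
        rw [abs_mul, abs_of_nonneg (hτ.1 x y)]


lemma improve (root : V) (parent : V → V) (w : V → ℝ) (hw : ∀ v, 0 ≤ w v)
    {μ ν : V → ℝ} {τ : V → V → ℝ} (hτ : IsPlan μ ν τ)
    {v x y x' y' : V} (hv : v ∈ Finset.univ.erase root) (hwv : 0 < w v)
    (hx : ∃ k, parent^[k] x = v) (hy' : ∃ k, parent^[k] y' = v)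
    (hx' : ¬ ∃ k, parent^[k] x' = v) (hy : ¬ ∃ k, parent^[k] y = v)
    (ht1 : 0 < τ x y) (ht2 : 0 < τ x' y') :
    ∃ τ' : V → V → ℝ, IsPlan μ ν τ' ∧
      ∑ a, ∑ b, τ' a b * treeDist root parent w a b <
      ∑ a, ∑ b, τ a b * treeDist root parent w a b := by
  classical
  have hxx' : x ≠ x' := by rintro rfl; exact hx' hx
  have hyy' : y ≠ y' := by rintro rfl; exact hy hy'
  set ε := min (τ x y) (τ x' y') with hε
  have hε0 : 0 < ε := lt_min ht1 ht2
  have hε1 : ε ≤ τ x y := min_le_left _ _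
  have hε2 : ε ≤ τ x' y' := min_le_right _ _
  have hsum_ca : ∑ a, ((if a = x then (1:ℝ) else 0) - (if a = x' then 1 else 0)) = 0 := by
    rw [Finset.sum_sub_distrib]; simp
  have hsum_cb : ∑ b, ((if b = y' then (1:ℝ) else 0) - (if b = y then 1 else 0)) = 0 := by
    rw [Finset.sum_sub_distrib]; simp
  refine ⟨fun a b => τ a b +
      (ε * ((if a = x then (1:ℝ) else 0) - (if a = x' then 1 else 0))) *
      ((if b = y' then (1:ℝ) else 0) - (if b = y then 1 else 0)), ⟨?_, ?_, ?_⟩, ?_⟩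
  · -- nonnegativity
    intro a b
    beta_reduce
    have hab := hτ.1 a b
    rcases eq_or_ne a x with h1 | h1
    · rw [if_pos h1, if_neg (show a ≠ x' by rw [h1]; exact hxx')]
      rcases eq_or_ne b y' with h4 | h4
      · rw [if_pos h4, if_neg (show b ≠ y by rw [h4]; exact Ne.symm hyy')]
        nlinarith
      · rw [if_neg h4]
        rcases eq_or_ne b y with h3 | h3
        · rw [if_pos h3]
          have hab' : τ a b = τ x y := by rw [h1, h3]
          nlinarith
        · rw [if_neg h3]; nlinarith
    · rw [if_neg h1]
      rcases eq_or_ne a x' with h2 | h2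
      · rw [if_pos h2]
        rcases eq_or_ne b y' with h4 | h4
        · rw [if_pos h4, if_neg (show b ≠ y by rw [h4]; exact Ne.symm hyy')]
          have hab' : τ a b = τ x' y' := by rw [h2, h4]
          nlinarith
        · rw [if_neg h4]
          rcases eq_or_ne b y with h3 | h3
          · rw [if_pos h3]; nlinarith
          · rw [if_neg h3]; nlinarith
      · rw [if_neg h2]; nlinarith
  · -- row sums
    intro a
    beta_reduce
    rw [Finset.sum_add_distrib, hτ.2.1 a, ← Finset.mul_sum, hsum_cb, mul_zero, add_zero]
  · -- column sums
    intro b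
    beta_reduce
    rw [Finset.sum_add_distrib, hτ.2.2 b, ← Finset.sum_mul]
    have h0 : ∑ a, ε * ((if a = x then (1:ℝ) else 0) - (if a = x' then 1 else 0)) = 0 := by
      rw [← Finset.mul_sum, hsum_ca, mul_zero]
    rw [h0, zero_mul, add_zero]
  · -- cost strictly decreases
    beta_reduce
    have hD : ∀ a, ∑ b, ((if b = y' then (1:ℝ) else 0) - (if b = y then 1 else 0)) *
        treeDist root parent w a b =
        treeDist root parent w a y' - treeDist root parent w a y := by
      intro a
      simp only [sub_mul, one_mul, zero_mul, ite_mul]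
      rw [Finset.sum_sub_distrib]
      simp [Finset.sum_ite_eq']
    have hE : ∑ a, ∑ b, ((ε * ((if a = x then (1:ℝ) else 0) - (if a = x' then 1 else 0))) *
          ((if b = y' then (1:ℝ) else 0) - (if b = y then 1 else 0))) *
          treeDist root parent w a b =
        ε * ((treeDist root parent w x y' - treeDist root parent w x y) -
             (treeDist root parent w x' y' - treeDist root parent w x' y)) := by
      have step : ∀ a, ∑ b, ((ε * ((if a = x then (1:ℝ) else 0) - (if a = x' then 1 else 0))) *
          ((if b = y' then (1:ℝ) else 0) - (if b = y then 1 else 0))) *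
          treeDist root parent w a b =
          (ε * ((if a = x then (1:ℝ) else 0) - (if a = x' then 1 else 0))) *
          (treeDist root parent w a y' - treeDist root parent w a y) := by
        intro a
        rw [← hD a, Finset.mul_sum]
        exact Finset.sum_congr rfl fun b _ => by ring
      simp_rw [step]
      simp only [mul_sub, sub_mul, one_mul, zero_mul, mul_zero, ite_mul, mul_ite]
      rw [Finset.sum_sub_distrib]
      simp [Finset.sum_ite_eq', Finset.sum_sub_distrib]
      ring
    have hq := dist_quad root parent w hw hv hx hy' hx' hy
    simp_rw [add_mul, Finset.sum_add_distrib]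
    have hneg : ∑ a, ∑ b, ((ε * ((if a = x then (1:ℝ) else 0) - (if a = x' then 1 else 0))) *
          ((if b = y' then (1:ℝ) else 0) - (if b = y then 1 else 0))) *
          treeDist root parent w a b < 0 := by
      rw [hE]; nlinarith
    linarith

lemma plans_nonempty {μ ν : V → ℝ} (hμ : ∀ v, 0 ≤ μ v) (hν : ∀ v, 0 ≤ ν v)
    (hmass : ∑ v, μ v = ∑ v, ν v) : ∃ τ, IsPlan μ ν τ := by
  by_cases hM : ∑ v, μ v = 0
  · have hμ0 : ∀ v, μ v = 0 := fun v =>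
      (Finset.sum_eq_zero_iff_of_nonneg (fun i _ => hμ i)).mp hM v (mem_univ v)
    have hνM : ∑ v, ν v = 0 := by rw [← hmass]; exact hM
    have hν0 : ∀ v, ν v = 0 := fun v =>
      (Finset.sum_eq_zero_iff_of_nonneg (fun i _ => hν i)).mp hνM v (mem_univ v)
    exact ⟨fun _ _ => 0, ⟨fun _ _ => le_refl 0, fun x => by simp [hμ0], fun y => by simp [hν0]⟩⟩
  · refine ⟨fun a b => μ a * ν b / (∑ v, μ v), ⟨?_, ?_, ?_⟩⟩
    · exact fun a b => div_nonneg (mul_nonneg (hμ a) (hν b)) (Finset.sum_nonneg fun i _ => hμ i)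
    · intro a
      rw [← Finset.sum_div, ← Finset.mul_sum, ← hmass, mul_div_assoc, div_self hM, mul_one]
    · intro b
      rw [← Finset.sum_div, ← Finset.sum_mul, hmass]
      rw [mul_comm, mul_div_assoc]
      rw [← hmass, div_self hM, mul_one]

lemma exists_min (root : V) (parent : V → V) (w : V → ℝ)
    {μ ν : V → ℝ} (hμ : ∀ v, 0 ≤ μ v) (hν : ∀ v, 0 ≤ ν v)
    (hmass : ∑ v, μ v = ∑ v, ν v) :
    ∃ τ₀, IsPlan μ ν τ₀ ∧ ∀ τ, IsPlan μ ν τ →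
      ∑ a, ∑ b, τ₀ a b * treeDist root parent w a b ≤
      ∑ a, ∑ b, τ a b * treeDist root parent w a b := by
  classical
  set P : Set (V → V → ℝ) := {τ | IsPlan μ ν τ} with hP
  have hne : P.Nonempty := plans_nonempty hμ hν hmass
  have hclosed : IsClosed P := by
    have hPeq : P = (⋂ x, ⋂ y, {τ : V → V → ℝ | 0 ≤ τ x y}) ∩
        ((⋂ x, {τ : V → V → ℝ | ∑ y, τ x y = μ x}) ∩
         (⋂ y, {τ : V → V → ℝ | ∑ x, τ x y = ν y})) := by
      ext τ
      simp only [hP, Set.mem_setOf_eq, Set.mem_inter_iff, Set.mem_iInter, IsPlan]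
    rw [hPeq]
    refine IsClosed.inter (isClosed_iInter fun x => isClosed_iInter fun y => ?_)
      (IsClosed.inter (isClosed_iInter fun x => ?_) (isClosed_iInter fun y => ?_))
    · exact isClosed_le continuous_const ((continuous_apply y).comp (continuous_apply x))
    · exact isClosed_eq (continuous_finset_sum _ fun y _ =>
        (continuous_apply y).comp (continuous_apply x)) continuous_const
    · exact isClosed_eq (continuous_finset_sum _ fun x _ =>
        (continuous_apply y).comp (continuous_apply x)) continuous_const
  have hsub : P ⊆ Set.Icc (fun _ _ => 0) (fun _ _ => ∑ v, μ v) := by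
    rintro τ ⟨h1, h2, h3⟩
    constructor
    · exact fun a b => h1 a b
    · intro a b
      calc τ a b ≤ ∑ y, τ a y := Finset.single_le_sum (fun i _ => h1 a i) (mem_univ b)
        _ = μ a := h2 a
        _ ≤ ∑ v, μ v := Finset.single_le_sum (fun i _ => hμ i) (mem_univ a)
  have hcompact : IsCompact P := IsCompact.of_isClosed_subset isCompact_Icc hclosed hsub
  have hcont : Continuous fun τ : V → V → ℝ =>
      ∑ a, ∑ b, τ a b * treeDist root parent w a b :=
    continuous_finset_sum _ fun a _ => continuous_finset_sum _ fun b _ =>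
      by fun_prop
  obtain ⟨τ₀, hτ₀P, hmin⟩ := hcompact.exists_isMinOn hne hcont.continuousOn
  exact ⟨τ₀, hτ₀P, fun τ hτ => hmin hτ⟩

/-- The greedy flow on a weighted rooted tree achieves cost
`Σ_v w(e_v)·|μ(subtree v) - ν(subtree v)|`, and this equals the optimal transport cost
between `μ` and `ν` under the tree metric `d_T`: i.e. there is a transport plan of
exactly this cost, and this quantity is the optimal transport cost. -/
theorem greedy_flow_tree_OT (root : V) (parent : V → V)
    (hroot : parent root = root) (hreach : ∀ v, ∃ k, parent^[k] v = root)
    (w : V → ℝ) (hw : ∀ v, 0 ≤ w v)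
    (μ ν : V → ℝ) (hμ : ∀ v, 0 ≤ μ v) (hν : ∀ v, 0 ≤ ν v)
    (hμsupp : ∀ v, μ v ≠ 0 → IsLeaf parent v) (hνsupp : ∀ v, ν v ≠ 0 → IsLeaf parent v)
    (hmass : ∑ v, μ v = ∑ v, ν v) :
    (∃ τ : V → V → ℝ, IsPlan μ ν τ ∧
      (∑ x, ∑ y, τ x y * treeDist root parent w x y) =
        ∑ v ∈ Finset.univ.erase root,
          w v * |subMass parent μ v - subMass parent ν v|) ∧
    treeOT root parent w μ ν =
      ∑ v ∈ Finset.univ.erase root,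
        w v * |subMass parent μ v - subMass parent ν v| := by
  classical
  obtain ⟨τ₀, hτ₀, hmin⟩ := exists_min root parent w hμ hν hmass
  have hcost : ∑ x, ∑ y, τ₀ x y * treeDist root parent w x y =
      ∑ v ∈ Finset.univ.erase root,
        w v * |subMass parent μ v - subMass parent ν v| := by
    refine le_antisymm ?_ (lower_bound root parent w hw hτ₀)
    by_contra hlt
    push_neg at hlt
    rw [cost_eq root parent w τ₀] at hlt
    obtain ⟨v, hvmem, hvlt⟩ := Finset.exists_lt_of_sum_lt hlt
    have hwv : 0 < w v := by
      rcases (hw v).lt_or_eq with h0 | h0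
      · exact h0
      · exfalso; rw [← h0] at hvlt; simp at hvlt
    have hcross : |subMass parent μ v - subMass parent ν v| < cross parent τ₀ v :=
      (mul_lt_mul_iff_right₀ hwv).mp hvlt
    set A := ∑ a, ∑ b, if (∃ k, parent^[k] a = v) ∧ ¬(∃ k, parent^[k] b = v)
        then τ₀ a b else 0 with hA_def
    set Bn := ∑ a, ∑ b, if ¬(∃ k, parent^[k] a = v) ∧ (∃ k, parent^[k] b = v)
        then τ₀ a b else 0 with hBn_def
    have hsplit1 : subMass parent μ v - subMass parent ν v = A - Bn := by
      rw [hA_def, hBn_def, plan_diff parent hτ₀ v, ← Finset.sum_sub_distrib]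
      apply Finset.sum_congr rfl; intro a _
      rw [← Finset.sum_sub_distrib]
      apply Finset.sum_congr rfl; intro b _
      by_cases h1 : ∃ k, parent^[k] a = v <;> by_cases h2 : ∃ k, parent^[k] b = v <;>
        simp [h1, h2]
    have hsplit2 : cross parent τ₀ v = A + Bn := by
      rw [hA_def, hBn_def]
      unfold cross
      rw [← Finset.sum_add_distrib]
      apply Finset.sum_congr rfl; intro a _
      rw [← Finset.sum_add_distrib]
      apply Finset.sum_congr rfl; intro b _
      by_cases h1 : ∃ k, parent^[k] a = v <;> by_cases h2 : ∃ k, parent^[k] b = v <;>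
        simp [h1, h2]
    have habs : -(A + Bn) < A - Bn ∧ A - Bn < A + Bn := by
      have h := hcross
      rw [hsplit1, hsplit2] at h
      exact abs_lt.mp h
    have hApos : 0 < A := by linarith [habs.1, habs.2]
    have hBpos : 0 < Bn := by linarith [habs.1, habs.2]
    have h1 : ∑ _a : V, (0:ℝ) < ∑ a, ∑ b, (if (∃ k, parent^[k] a = v) ∧ ¬(∃ k, parent^[k] b = v)
        then τ₀ a b else 0) := by rw [← hA_def]; simpa using hApos
    obtain ⟨a, -, ha⟩ := Finset.exists_lt_of_sum_lt h1
    obtain ⟨b, -, hb⟩ := Finset.exists_lt_of_sum_lt (by simpa using ha :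
      ∑ _b : V, (0:ℝ) < ∑ b, (if (∃ k, parent^[k] a = v) ∧ ¬(∃ k, parent^[k] b = v)
        then τ₀ a b else 0))
    have hcond1 : ((∃ k, parent^[k] a = v) ∧ ¬(∃ k, parent^[k] b = v)) ∧ 0 < τ₀ a b := by
      by_cases h : (∃ k, parent^[k] a = v) ∧ ¬(∃ k, parent^[k] b = v)
      · rw [if_pos h] at hb; exact ⟨h, hb⟩
      · rw [if_neg h] at hb; exact absurd hb (lt_irrefl 0)
    have h2 : ∑ _a : V, (0:ℝ) < ∑ a, ∑ b, (if ¬(∃ k, parent^[k] a = v) ∧ (∃ k, parent^[k] b = v)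
        then τ₀ a b else 0) := by rw [← hBn_def]; simpa using hBpos
    obtain ⟨a', -, ha'⟩ := Finset.exists_lt_of_sum_lt h2
    obtain ⟨b', -, hb'⟩ := Finset.exists_lt_of_sum_lt (by simpa using ha' :
      ∑ _b : V, (0:ℝ) < ∑ b, (if ¬(∃ k, parent^[k] a' = v) ∧ (∃ k, parent^[k] b = v)
        then τ₀ a' b else 0))
    have hcond2 : (¬(∃ k, parent^[k] a' = v) ∧ (∃ k, parent^[k] b' = v)) ∧ 0 < τ₀ a' b' := by
      by_cases h : ¬(∃ k, parent^[k] a' = v) ∧ (∃ k, parent^[k] b' = v)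
      · rw [if_pos h] at hb'; exact ⟨h, hb'⟩
      · rw [if_neg h] at hb'; exact absurd hb' (lt_irrefl 0)
    obtain ⟨τ', hτ', hlt'⟩ := improve root parent w hw hτ₀ hvmem hwv
      hcond1.1.1 hcond2.1.2 hcond2.1.1 hcond1.1.2 hcond1.2 hcond2.2
    exact absurd (hmin τ' hτ') (not_le.mpr hlt')
  refine ⟨⟨τ₀, hτ₀, hcost⟩, ?_⟩
  have hlb : ∀ c ∈ {c | ∃ τ : V → V → ℝ, IsPlan μ ν τ ∧
      (∑ x, ∑ y, τ x y * treeDist root parent w x y) = c},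
      (∑ v ∈ Finset.univ.erase root,
        w v * |subMass parent μ v - subMass parent ν v|) ≤ c := by
    rintro c ⟨τ, hτ, rfl⟩
    exact lower_bound root parent w hw hτ
  have hmem : (∑ v ∈ Finset.univ.erase root,
      w v * |subMass parent μ v - subMass parent ν v|) ∈ {c | ∃ τ : V → V → ℝ,
      IsPlan μ ν τ ∧ (∑ x, ∑ y, τ x y * treeDist root parent w x y) = c} :=
    ⟨τ₀, hτ₀, hcost⟩
  unfold treeOT
  exact le_antisymm (csInf_le ⟨_, hlb⟩ hmem) (le_csInf ⟨_, hmem⟩ hlb)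
end
end
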